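/- There exists δ₀ ∈ (0, 1) such that for every δ ∈ (0, δ₀), all a, c ∈ (0, δ²], and all b, b̃ ∈ [0.9, 1] the following hold: (i) ‖p_{a,b} − q_{b,c}‖ < 1, so the closed balls of radius 1/2 centered at p_{a,b} and q_{b,c} intersect; (ii) if |b − b̃| ≥ δ^{1/3}, then ‖p_{a,b} − q_{b̃,c}‖ > 1, so the closed balls of radius 1/2 centered at p_{a,b} and q_{b̃,c} are disjoint. -/

import Mathlib

noncomputable section

/-- The point `p_{a,b} = (1 + a·cos δ − b·sin δ, a·sin δ + b·cos δ, √(1 − b²))` in `ℝ³`. -/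
def pPt (δ a b : ℝ) : EuclideanSpace ℝ (Fin 3) :=
  (WithLp.equiv 2 (Fin 3 → ℝ)).symm
    ![1 + a * Real.cos δ - b * Real.sin δ, a * Real.sin δ + b * Real.cos δ,
      Real.sqrt (1 - b ^ 2)]

/-- The point `q_{b,c} = (−c, b, √(1 − b²))` in `ℝ³`. -/
def qPt (b c : ℝ) : EuclideanSpace ℝ (Fin 3) :=
  (WithLp.equiv 2 (Fin 3 → ℝ)).symm ![-c, b, Real.sqrt (1 - b ^ 2)]

lemma pq_normsq (δ a b b' c : ℝ) :
    ‖pPt δ a b - qPt b' c‖ ^ 2 =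
      (1 + a * Real.cos δ - b * Real.sin δ + c) ^ 2 +
      (a * Real.sin δ + b * Real.cos δ - b') ^ 2 +
      (Real.sqrt (1 - b ^ 2) - Real.sqrt (1 - b' ^ 2)) ^ 2 := by
  rw [EuclideanSpace.norm_eq, Real.sq_sqrt (by positivity)]
  simp [pPt, qPt, Fin.sum_univ_three, sq_abs]

set_option maxHeartbeats 1000000 in
lemma key_lt (δ a c b : ℝ) (hδ0 : 0 < δ) (hδ : δ < 1/1000)
    (ha0 : 0 < a) (ha : a ≤ δ^2) (hc0 : 0 < c) (hc : c ≤ δ^2)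
    (hb0 : (0.9:ℝ) ≤ b) (hb1 : b ≤ 1) :
    (1 + a * Real.cos δ - b * Real.sin δ + c) ^ 2 +
      (a * Real.sin δ + b * Real.cos δ - b) ^ 2 < 1 := by
  have hs1 : Real.sin δ < δ := Real.sin_lt hδ0
  have hs2 : δ - δ^3/4 < Real.sin δ := by have := Real.sin_gt_sub_cube hδ0; linarith [pow_pos hδ0 3]
  have hs0 : 0 < Real.sin δ := by nlinarith
  have hco1 : Real.cos δ ≤ 1 := Real.cos_le_one δ
  have hco2 : 1 - δ^2/2 ≤ Real.cos δ := Real.one_sub_sq_div_two_le_cos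
  have hco0 : 0 < Real.cos δ := by nlinarith
  set x := 1 + a * Real.cos δ - b * Real.sin δ + c with hx
  set y := a * Real.sin δ + b * Real.cos δ - b with hy
  have hδ2 : δ^2 ≤ δ/1000 := by nlinarith
  have hδ3 : δ^3 ≤ δ^2/1000 := by nlinarith
  have hδ4 : δ^4 ≤ δ^3/1000 := by nlinarith
  have has : a * Real.sin δ ≤ δ^2 * δ :=
    mul_le_mul ha hs1.le hs0.le (sq_nonneg δ)
  have hac : a * Real.cos δ ≤ δ^2 :=
    (mul_le_of_le_one_right ha0.le hco1).trans ha
  have hbs : 0.9 * (δ - δ^3/4) ≤ b * Real.sin δ :=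
    mul_le_mul hb0 hs2.le (by nlinarith) (by linarith)
  have hbs' : b * Real.sin δ ≤ δ := by nlinarith
  have hbco1 : b * Real.cos δ - b ≤ 0 := by nlinarith
  have hbco2 : -(δ^2/2) ≤ b * Real.cos δ - b := by
    nlinarith [mul_nonpos_of_nonneg_of_nonpos (by linarith : (0:ℝ) ≤ 1-b)
      (by linarith : Real.cos δ - 1 ≤ 0)]
  have hx1 : x ≤ 1 - 0.897*δ := by rw [hx]; nlinarith
  have hx0 : 0 ≤ x := by rw [hx]; nlinarith
  have h1 : x^2 ≤ (1 - 0.897*δ)^2 := sq_le_sq' (by nlinarith) hx1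
  have h2 : y^2 ≤ (δ^2/2)^2 := sq_le_sq' (by rw [hy]; nlinarith) (by rw [hy]; nlinarith)
  nlinarith

set_option maxHeartbeats 1000000 in
lemma key_gt (δ a c b b' : ℝ) (hδ0 : 0 < δ) (hδ : δ < 1/1000)
    (ha0 : 0 < a) (ha : a ≤ δ^2) (hc0 : 0 < c) (hc : c ≤ δ^2)
    (hb0 : (0.9:ℝ) ≤ b) (hb1 : b ≤ 1) (hb0' : (0.9:ℝ) ≤ b') (hb1' : b' ≤ 1)
    (hbb : |b - b'| ≥ δ ^ ((1:ℝ)/3)) :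
    (1 + a * Real.cos δ - b * Real.sin δ + c) ^ 2 +
      (a * Real.sin δ + b * Real.cos δ - b') ^ 2 > 1 := by
  set t := δ ^ ((1:ℝ)/3) with htdef
  have ht3 : t ^ 3 = δ := by
    rw [htdef, ← Real.rpow_natCast (δ ^ ((1:ℝ)/3)) 3, ← Real.rpow_mul hδ0.le]
    norm_num
  have ht0 : 0 < t := Real.rpow_pos_of_pos hδ0 _
  have ht1 : t < 1/10 := by
    refine lt_of_pow_lt_pow_left₀ 3 (by norm_num) ?_
    rw [ht3]; norm_num [hδ]
  have hs1 : Real.sin δ < δ := Real.sin_lt hδ0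
  have hs0 : 0 < Real.sin δ := Real.sin_pos_of_pos_of_lt_pi hδ0 (by linarith [Real.pi_gt_three])
  have hco1 : Real.cos δ ≤ 1 := Real.cos_le_one δ
  have hco2 : 1 - δ^2/2 ≤ Real.cos δ := Real.one_sub_sq_div_two_le_cos
  have hco0 : 0 < Real.cos δ := by nlinarith
  set x := 1 + a * Real.cos δ - b * Real.sin δ + c with hx
  set y := a * Real.sin δ + b * Real.cos δ - b' with hy
  have has : a * Real.sin δ ≤ δ^2 * δ := mul_le_mul ha hs1.le hs0.le (sq_nonneg δ)
  have has0 : 0 < a * Real.sin δ := mul_pos ha0 hs0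
  have hbs' : b * Real.sin δ ≤ δ := by nlinarith
  have hbco1 : b * Real.cos δ - b ≤ 0 := by nlinarith
  have hbco2 : -(δ^2/2) ≤ b * Real.cos δ - b := by
    nlinarith [mul_nonpos_of_nonneg_of_nonpos (by linarith : (0:ℝ) ≤ 1-b)
      (by linarith : Real.cos δ - 1 ≤ 0)]
  have hx0 : 1 - t^3 ≤ x := by
    rw [hx, ht3]; nlinarith [mul_pos ha0 hco0]
  have ht3pos : (0:ℝ) < t^3 := by rw [ht3]; exact hδ0
  have h1 : (1 - t^3)^2 ≤ x^2 := by nlinarith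
  have h6 : t^6 = δ^2 := by rw [← ht3]; ring
  have h9 : t^9 = δ^3 := by rw [← ht3]; ring
  have h2 : (t - t^6/2)^2 ≤ y^2 := by
    have ht96 : t^9 ≤ t^6/2 := by nlinarith [pow_pos ht0 6]
    have h5 : t^5 ≤ 1 := pow_le_one₀ ht0.le (by linarith)
    have hu0 : (0:ℝ) ≤ t - t^6/2 := by nlinarith [mul_le_mul_of_nonneg_right h5 ht0.le]
    rcases le_abs.mp hbb with h | h
    · have hyl : t - t^6/2 ≤ y := by rw [hy, h6]; nlinarith
      exact pow_le_pow_left₀ hu0 hyl 2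
    · have hyu : y ≤ -t + t^9 := by rw [hy, h9]; nlinarith
      have hyl : t - t^6/2 ≤ -y := by linarith
      calc (t - t^6/2)^2 ≤ (-y)^2 := pow_le_pow_left₀ hu0 hyl 2
        _ = y^2 := neg_sq y
  nlinarith [mul_pos (pow_pos ht0 2) (by linarith : (0:ℝ) < 1 - 2*t),
    mul_nonneg (le_of_lt (pow_pos ht0 6)) (by linarith : (0:ℝ) ≤ 1 - t)]

theorem stmt1 :
    ∃ δ₀ : ℝ, δ₀ ∈ Set.Ioo (0 : ℝ) 1 ∧
      ∀ δ ∈ Set.Ioo (0 : ℝ) δ₀, ∀ a ∈ Set.Ioc (0 : ℝ) (δ ^ 2),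
        ∀ c ∈ Set.Ioc (0 : ℝ) (δ ^ 2), ∀ b ∈ Set.Icc (0.9 : ℝ) 1,
          ∀ b' ∈ Set.Icc (0.9 : ℝ) 1,
        (‖pPt δ a b - qPt b c‖ < 1 ∧
          (Metric.closedBall (pPt δ a b) (1 / 2) ∩
            Metric.closedBall (qPt b c) (1 / 2)).Nonempty) ∧
        (|b - b'| ≥ δ ^ ((1 : ℝ) / 3) →
          ‖pPt δ a b - qPt b' c‖ > 1 ∧
          Disjoint (Metric.closedBall (pPt δ a b) (1 / 2))
            (Metric.closedBall (qPt b' c) (1 / 2))) := by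
  refine ⟨1/1000, ⟨by norm_num, by norm_num⟩, ?_⟩
  rintro δ ⟨hδ0, hδ1⟩ a ⟨ha0, ha⟩ c ⟨hc0, hc⟩ b ⟨hb0, hb1⟩ b' ⟨hb0', hb1'⟩
  have hlt : ‖pPt δ a b - qPt b c‖ < 1 := by
    have hsq : ‖pPt δ a b - qPt b c‖ ^ 2 < 1 := by
      rw [pq_normsq]
      have := key_lt δ a c b hδ0 hδ1 ha0 ha hc0 hc hb0 hb1
      simp only [sub_self]
      nlinarith
    nlinarith [norm_nonneg (pPt δ a b - qPt b c)]
  refine ⟨⟨hlt, ?_⟩, ?_⟩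
  · refine ⟨midpoint ℝ (pPt δ a b) (qPt b c), ?_, ?_⟩
    · rw [Metric.mem_closedBall, dist_midpoint_left]
      rw [dist_eq_norm]
      simp only [Real.norm_ofNat]
      linarith
    · rw [Metric.mem_closedBall, dist_midpoint_right]
      rw [dist_eq_norm]
      simp only [Real.norm_ofNat]
      linarith
  · intro hbb
    have hgt : ‖pPt δ a b - qPt b' c‖ > 1 := by
      have hsq : ‖pPt δ a b - qPt b' c‖ ^ 2 > 1 := by
        rw [pq_normsq]
        have := key_gt δ a c b b' hδ0 hδ1 ha0 ha hc0 hc hb0 hb1 hb0' hb1' hbb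
        nlinarith [sq_nonneg (Real.sqrt (1 - b ^ 2) - Real.sqrt (1 - b' ^ 2))]
      nlinarith [norm_nonneg (pPt δ a b - qPt b' c)]
    refine ⟨hgt, Metric.closedBall_disjoint_closedBall ?_⟩
    rw [dist_eq_norm]
    linarith
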